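/- For every d ≥ 1, every unit vector v ∈ ℝ^d, and every ε > 0, there exists a probability measure μ on {−1,+1}^d under which the d coordinates are independent (μ depends only on d, v and ε), such that for every x ∈ {−1,+1}^d with (1/d)|⟨x, v⟩|² ≥ ε one has μ({x̂ ∈ {−1,+1}^d : (1/d)|⟨x, x̂⟩| ≥ ε/8}) ≥ 1 − 64/(d ε²). -/

import Mathlib

open MeasureTheory ProbabilityTheory

noncomputable section

namespace RandRound

/-- Measure on ℝ giving mass `p` to `1` and `1-p` to `-1`. -/
def bern (p : ℝ) : Measure ℝ :=
  ENNReal.ofReal p • Measure.dirac 1 + ENNReal.ofReal (1 - p) • Measure.dirac (-1)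

lemma bern_univ (p : ℝ) (h0 : 0 ≤ p) (h1 : p ≤ 1) : bern p Set.univ = 1 := by
  simp only [bern, Measure.add_apply, Measure.smul_apply, measure_univ, smul_eq_mul, mul_one]
  rw [← ENNReal.ofReal_add h0 (by linarith)]
  norm_num

lemma bern_isProb (p : ℝ) (h0 : 0 ≤ p) (h1 : p ≤ 1) : IsProbabilityMeasure (bern p) :=
  ⟨bern_univ p h0 h1⟩

lemma bern_apply_of_mem (p : ℝ) {s : Set ℝ} (h1 : (1:ℝ) ∈ s) (h2 : (-1:ℝ) ∈ s) :
    bern p s = ENNReal.ofReal p + ENNReal.ofReal (1 - p) := by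
  simp only [bern, Measure.add_apply, Measure.smul_apply, smul_eq_mul]
  rw [Measure.dirac_apply_of_mem h1, Measure.dirac_apply_of_mem h2, mul_one, mul_one]

lemma bern_signs (p : ℝ) (h0 : 0 ≤ p) (h1 : p ≤ 1) :
    bern p {t : ℝ | t = 1 ∨ t = -1} = 1 := by
  rw [bern_apply_of_mem p (by simp) (by simp), ← ENNReal.ofReal_add h0 (by linarith)]
  norm_num

lemma integrable_smul_dirac (c : ENNReal) (hc : c ≠ ⊤) (a : ℝ) {f : ℝ → ℝ} (hf : Measurable f) :
    Integrable f (c • Measure.dirac a) := by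
  refine Integrable.smul_measure ⟨hf.aestronglyMeasurable, ?_⟩ hc
  simp [HasFiniteIntegral, lintegral_dirac]

lemma bern_integral (p : ℝ) (h0 : 0 ≤ p) (h1 : p ≤ 1) {f : ℝ → ℝ} (hf : Measurable f) :
    ∫ t, f t ∂(bern p) = p * f 1 + (1 - p) * f (-1) := by
  rw [bern, integral_add_measure
      (integrable_smul_dirac _ ENNReal.ofReal_ne_top _ hf)
      (integrable_smul_dirac _ ENNReal.ofReal_ne_top _ hf),
    integral_smul_measure, integral_smul_measure, integral_dirac, integral_dirac,
    ENNReal.toReal_ofReal h0, ENNReal.toReal_ofReal (by linarith)]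
  simp [smul_eq_mul]

end RandRound

variable {d : ℕ}

lemma map_eval_pi (μs : Fin d → Measure ℝ) [∀ i, IsProbabilityMeasure (μs i)] (i : Fin d) :
    (Measure.pi μs).map (Function.eval i) = μs i := by
  classical
  ext s hs
  rw [Measure.map_apply (measurable_pi_apply i) hs, Set.eval_preimage, Measure.pi_pi]
  rw [Fintype.prod_eq_single i (fun j hj => by simp [Function.update_of_ne hj])]
  simp

lemma integral_eval_pi (μs : Fin d → Measure ℝ) [∀ i, IsProbabilityMeasure (μs i)] (i : Fin d)
    {f : ℝ → ℝ} (hf : Measurable f) :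
    ∫ y, f (y i) ∂(Measure.pi μs) = ∫ t, f t ∂(μs i) := by
  rw [← map_eval_pi μs i, integral_map (measurable_pi_apply i).aemeasurable
    (by rw [map_eval_pi μs i]; exact hf.aestronglyMeasurable)]

lemma iIndepFun_pi (μs : Fin d → Measure ℝ) [∀ i, IsProbabilityMeasure (μs i)] :
    iIndepFun (fun i (y : Fin d → ℝ) => y i) (Measure.pi μs) := by
  classical
  rw [iIndepFun_iff_measure_inter_preimage_eq_mul]
  intro S sets hsets
  set t : Fin d → Set ℝ := fun i => if i ∈ S then sets i else Set.univ with ht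
  have hset : (⋂ i ∈ S, (fun y : Fin d → ℝ => y i) ⁻¹' sets i) = Set.pi Set.univ t := by
    ext y
    simp only [Set.mem_iInter, Set.mem_preimage, Set.mem_pi, Set.mem_univ, true_implies, ht]
    constructor
    · intro h i
      by_cases hi : i ∈ S <;> simp [hi, h]
    · intro h i hi
      have := h i
      simpa [hi] using this
  rw [hset, Measure.pi_pi]
  have h2 : ∀ i ∈ S, (Measure.pi μs) ((fun y : Fin d → ℝ => y i) ⁻¹' sets i) = μs i (sets i) := by
    intro i hi
    rw [← map_eval_pi μs i, Measure.map_apply (measurable_pi_apply i) (hsets i hi)]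
  rw [Finset.prod_congr rfl h2]
  calc ∏ i, μs i (t i) = ∏ i ∈ S, μs i (t i) :=
        (Finset.prod_subset (Finset.subset_univ S) (fun i _ hi => by simp [ht, hi])).symm
    _ = ∏ i ∈ S, μs i (sets i) := Finset.prod_congr rfl fun i hi => by simp [ht, hi]

/-- The scaling constant. -/
def cc (d : ℕ) (ε : ℝ) : ℝ := Real.sqrt (d * ε) / 2

/-- The clamped scaled vector. -/
def ww (d : ℕ) (ε : ℝ) (v : Fin d → ℝ) (i : Fin d) : ℝ := max (-1) (min 1 (cc d ε * v i))

lemma ww_mem (d : ℕ) (ε : ℝ) (v : Fin d → ℝ) (i : Fin d) :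
    -1 ≤ ww d ε v i ∧ ww d ε v i ≤ 1 :=
  ⟨le_max_left _ _, max_le (by norm_num) (min_le_left _ _)⟩

lemma key_det (d : ℕ) (hd : 1 ≤ d) (v : Fin d → ℝ) (hv : ∑ i, v i ^ 2 = 1) (ε : ℝ)
    (hε : 0 < ε) (x : Fin d → ℝ) (hx : ∀ i, x i = 1 ∨ x i = -1)
    (hcorr : ε ≤ (1 / d) * |∑ i, x i * v i| ^ 2) :
    (d : ℝ) * ε / 4 ≤ |∑ i, x i * ww d ε v i| := by
  classical
  have hdpos : (0 : ℝ) < d := by exact_mod_cast hd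
  have hdε : (0 : ℝ) < d * ε := mul_pos hdpos hε
  set c : ℝ := cc d ε with hcdef
  have hc : 0 < c := div_pos (Real.sqrt_pos.mpr hdε) (by norm_num)
  have hc2 : c ^ 2 = d * ε / 4 := by
    rw [hcdef, cc, div_pow, Real.sq_sqrt hdε.le]; norm_num
  have habs1 : ∀ i, |x i| = 1 := fun i => by rcases hx i with h | h <;> simp [h]
  have hxv : Real.sqrt (d * ε) ≤ |∑ i, x i * v i| := by
    have h1 : d * ε ≤ |∑ i, x i * v i| ^ 2 := by
      have h2 := mul_le_mul_of_nonneg_left hcorr hdpos.le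
      rw [← mul_assoc, mul_one_div, div_self hdpos.ne', one_mul] at h2
      exact h2
    calc Real.sqrt (d * ε) ≤ Real.sqrt (|∑ i, x i * v i| ^ 2) := Real.sqrt_le_sqrt h1
      _ = |∑ i, x i * v i| := Real.sqrt_sq (abs_nonneg _)
  set T : Finset (Fin d) := Finset.univ.filter (fun i => 1 < |c * v i|) with hT
  have hmemT : ∀ i, i ∈ T ↔ 1 < |c * v i| := by
    intro i; rw [hT, Finset.mem_filter]; simp
  have hwe : ∀ i, |c * v i| ≤ 1 → ww d ε v i = c * v i := by
    intro i hi
    rw [abs_le] at hi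
    unfold ww
    rw [← hcdef, min_eq_right hi.2, max_eq_right hi.1]
  have hterm : ∀ i, |c * v i - ww d ε v i| ≤ if i ∈ T then |c * v i| else 0 := by
    intro i
    by_cases hi : i ∈ T
    · simp only [hi, if_true]
      have h1 : 1 < |c * v i| := (hmemT i).mp hi
      rcases lt_abs.mp h1 with h | h
      · have hw1 : ww d ε v i = 1 := by
          unfold ww
          rw [← hcdef, min_eq_left h.le, max_eq_right (by norm_num)]
        rw [hw1, abs_of_pos (by linarith), abs_of_nonneg (by linarith)]
        linarith
      · have hw1 : ww d ε v i = -1 := by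
          unfold ww
          rw [← hcdef, min_eq_right (by linarith), max_eq_left (by linarith)]
        rw [hw1, sub_neg_eq_add, abs_of_neg (by linarith : c * v i + 1 < 0),
          abs_of_neg (by linarith : c * v i < 0)]
        linarith
    · simp only [hi, if_false]
      have h1 : |c * v i| ≤ 1 := not_lt.mp (fun h => hi ((hmemT i).mpr h))
      rw [hwe i h1]; simp
  have hTsub : ∑ i ∈ T, v i ^ 2 ≤ 1 :=
    hv ▸ Finset.sum_le_sum_of_subset_of_nonneg (Finset.subset_univ T)
      (fun i _ _ => sq_nonneg _)
  have hTcard : (T.card : ℝ) ≤ c ^ 2 := by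
    have h1 : ∀ i ∈ T, (1 : ℝ) ≤ c ^ 2 * v i ^ 2 := by
      intro i hi
      have h2 : 1 < |c * v i| := (hmemT i).mp hi
      nlinarith [sq_abs (c * v i), abs_nonneg (c * v i)]
    calc (T.card : ℝ) = ∑ _i ∈ T, (1 : ℝ) := by simp
      _ ≤ ∑ i ∈ T, c ^ 2 * v i ^ 2 := Finset.sum_le_sum h1
      _ = c ^ 2 * ∑ i ∈ T, v i ^ 2 := by rw [Finset.mul_sum]
      _ ≤ c ^ 2 * 1 := mul_le_mul_of_nonneg_left hTsub (sq_nonneg c)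
      _ = c ^ 2 := mul_one _
  have hCS := Finset.sum_mul_sq_le_sq_mul_sq T (fun _ => (1 : ℝ)) (fun i => |c * v i|)
  simp only [one_mul, one_pow, sq_abs, Finset.sum_const, nsmul_eq_mul, mul_one] at hCS
  have hsq : ∑ i ∈ T, (c * v i) ^ 2 = c ^ 2 * ∑ i ∈ T, v i ^ 2 := by
    rw [Finset.mul_sum]; exact Finset.sum_congr rfl fun i _ => by ring
  have hsumT : ∑ i ∈ T, |c * v i| ≤ c ^ 2 := by
    have hnn : 0 ≤ ∑ i ∈ T, |c * v i| := Finset.sum_nonneg fun i _ => abs_nonneg _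
    have hub : (∑ i ∈ T, |c * v i|) ^ 2 ≤ (c ^ 2) ^ 2 := by
      calc (∑ i ∈ T, |c * v i|) ^ 2 ≤ (T.card : ℝ) * ∑ i ∈ T, (c * v i) ^ 2 := hCS
        _ = (T.card : ℝ) * (c ^ 2 * ∑ i ∈ T, v i ^ 2) := by rw [hsq]
        _ ≤ c ^ 2 * (c ^ 2 * 1) := by
            apply mul_le_mul hTcard (mul_le_mul_of_nonneg_left hTsub (sq_nonneg c))
              (by positivity) (sq_nonneg c)
        _ = (c ^ 2) ^ 2 := by ring
    nlinarith [hub, hnn, sq_nonneg c]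
  have herr : ∑ i, |c * v i - ww d ε v i| ≤ c ^ 2 := by
    calc ∑ i, |c * v i - ww d ε v i|
        ≤ ∑ i, (if i ∈ T then |c * v i| else 0) := Finset.sum_le_sum fun i _ => hterm i
      _ = ∑ i ∈ T, |c * v i| := by
          rw [Finset.sum_ite_mem, Finset.univ_inter]
      _ ≤ c ^ 2 := hsumT
  have hsplit : ∑ i, x i * ww d ε v i
      = c * (∑ i, x i * v i) - ∑ i, x i * (c * v i - ww d ε v i) := by
    rw [Finset.mul_sum, ← Finset.sum_sub_distrib]
    exact Finset.sum_congr rfl fun i _ => by ring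
  have habs2 : |∑ i, x i * (c * v i - ww d ε v i)| ≤ c ^ 2 := by
    calc |∑ i, x i * (c * v i - ww d ε v i)|
        ≤ ∑ i, |x i * (c * v i - ww d ε v i)| := Finset.abs_sum_le_sum_abs _ _
      _ = ∑ i, |c * v i - ww d ε v i| := by
          exact Finset.sum_congr rfl fun i _ => by rw [abs_mul, habs1 i, one_mul]
      _ ≤ c ^ 2 := herr
  have hmain : c * Real.sqrt (d * ε) - c ^ 2 ≤ |∑ i, x i * ww d ε v i| := by
    have h1 : c * Real.sqrt (d * ε) - c ^ 2
        ≤ |c * ∑ i, x i * v i| - |∑ i, x i * (c * v i - ww d ε v i)| := by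
      rw [abs_mul, abs_of_pos hc]
      have := mul_le_mul_of_nonneg_left hxv hc.le
      linarith
    have h2 : |c * ∑ i, x i * v i| - |∑ i, x i * (c * v i - ww d ε v i)|
        ≤ |c * ∑ i, x i * v i - ∑ i, x i * (c * v i - ww d ε v i)| :=
      abs_sub_abs_le_abs_sub _ _
    rw [← hsplit] at h2
    linarith
  have hcs : c * Real.sqrt (d * ε) = d * ε / 2 := by
    rw [hcdef, cc, div_mul_eq_mul_div, Real.mul_self_sqrt hdε.le]
  rw [hcs, hc2] at hmain
  linarith

open RandRound

set_option maxHeartbeats 1000000 in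
/-- Lemma: randomized rounding of a unit vector to a sign vector.
For every d ≥ 1, unit vector v ∈ ℝ^d and ε > 0, there is a probability measure on sign
vectors with independent coordinates such that every sign vector x with
(1/d)|⟨x,v⟩|² ≥ ε is recovered with probability at least 1 - 64/(d ε²) up to correlation
ε/8. -/
theorem randomized_rounding (d : ℕ) (hd : 1 ≤ d) (v : Fin d → ℝ)
    (hv : ∑ i, v i ^ 2 = 1) (ε : ℝ) (hε : 0 < ε) :
    ∃ μ : Measure (Fin d → ℝ), IsProbabilityMeasure μ ∧
      μ {y | ∀ i, y i = 1 ∨ y i = -1} = 1 ∧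
      iIndepFun (fun (i : Fin d) (y : Fin d → ℝ) => y i) μ ∧
      ∀ x : Fin d → ℝ, (∀ i, x i = 1 ∨ x i = -1) →
        ε ≤ (1 / d) * |∑ i, x i * v i| ^ 2 →
        ENNReal.ofReal (1 - 64 / (d * ε ^ 2)) ≤
          μ {y | ε / 8 ≤ (1 / d) * |∑ i, x i * y i|} := by
  classical
  have hdpos : (0 : ℝ) < d := by exact_mod_cast hd
  set w : Fin d → ℝ := ww d ε v with hwdef
  set p : Fin d → ℝ := fun i => (1 + w i) / 2 with hpdef
  have hp0 : ∀ i, 0 ≤ p i := fun i => by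
    have := (ww_mem d ε v i).1; rw [hpdef]; dsimp; linarith
  have hp1 : ∀ i, p i ≤ 1 := fun i => by
    have := (ww_mem d ε v i).2; rw [hpdef]; dsimp; linarith
  set μs : Fin d → Measure ℝ := fun i => bern (p i) with hμsdef
  haveI : ∀ i, IsProbabilityMeasure (μs i) := fun i => bern_isProb _ (hp0 i) (hp1 i)
  set μ : Measure (Fin d → ℝ) := Measure.pi μs with hμdef
  haveI hprob : IsProbabilityMeasure μ := by rw [hμdef]; infer_instance
  have hsignsSet : {y : Fin d → ℝ | ∀ i, y i = 1 ∨ y i = -1}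
      = Set.pi Set.univ (fun _ => {t : ℝ | t = 1 ∨ t = -1}) := by
    ext y; simp [Set.mem_pi]
  have hsigns : μ {y | ∀ i, y i = 1 ∨ y i = -1} = 1 := by
    rw [hsignsSet, hμdef, Measure.pi_pi]
    exact Finset.prod_eq_one fun i _ => bern_signs _ (hp0 i) (hp1 i)
  refine ⟨μ, hprob, hsigns, by rw [hμdef]; exact iIndepFun_pi μs, ?_⟩
  intro x hx hcorr
  -- a.e. sign vector
  have hsMeas : MeasurableSet {y : Fin d → ℝ | ∀ i, y i = 1 ∨ y i = -1} := by
    have : {y : Fin d → ℝ | ∀ i, y i = 1 ∨ y i = -1}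
        = ⋂ i, (fun y : Fin d → ℝ => y i) ⁻¹' {1, -1} := by
      ext y; simp [Set.mem_iInter]
    rw [this]
    exact MeasurableSet.iInter fun i =>
      (measurable_pi_apply i) ((measurableSet_singleton (-1)).insert 1)
  have hae : ∀ᵐ y ∂μ, ∀ i, y i = 1 ∨ y i = -1 := by
    rw [ae_iff]
    have h0 : μ {y : Fin d → ℝ | ∀ i, y i = 1 ∨ y i = -1}ᶜ = 0 :=
      (prob_compl_eq_zero_iff hsMeas).mpr hsigns
    simpa [Set.compl_setOf] using h0
  set f : Fin d → (Fin d → ℝ) → ℝ := fun i y => x i * y i with hfdef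
  have hmeas : ∀ i, Measurable (f i) := fun i =>
    show Measurable (fun y : Fin d → ℝ => x i * y i) from by fun_prop
  have hx2 : ∀ i, (x i) ^ 2 = 1 := fun i => by rcases hx i with h | h <;> simp [h]
  have habsx : ∀ i, |x i| = 1 := fun i => by rcases hx i with h | h <;> simp [h]
  have hmem2 : ∀ i, MemLp (f i) 2 μ := by
    intro i
    refine MemLp.of_bound (hmeas i).aestronglyMeasurable 1 (hae.mono fun y hy => ?_)
    rcases hy i with h | h <;>
      simp [hfdef, h, Real.norm_eq_abs, abs_mul, habsx i]
  -- expectations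
  have hEy : ∀ i, ∫ y, y i ∂μ = w i := by
    intro i
    rw [hμdef, integral_eval_pi μs i (f := fun t => t) measurable_id', hμsdef]
    rw [bern_integral (p i) (hp0 i) (hp1 i) measurable_id']
    rw [hpdef]; dsimp; ring
  have hEy2 : ∀ i, ∫ y, (y i) ^ 2 ∂μ = 1 := by
    intro i
    rw [hμdef, integral_eval_pi μs i (f := fun t => t ^ 2) (measurable_id'.pow_const 2), hμsdef]
    rw [bern_integral (p i) (hp0 i) (hp1 i) (measurable_id'.pow_const 2)]
    ring
  have hEi : ∀ i, ∫ y, f i y ∂μ = x i * w i := by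
    intro i
    have h := integral_const_mul (μ := μ) (x i) (fun y : Fin d → ℝ => y i)
    rw [hEy i] at h
    exact h
  have hvar : ∀ i, variance (f i) μ = 1 - (w i) ^ 2 := by
    intro i
    rw [variance_eq_sub (hmem2 i)]
    have h2 : μ[(f i) ^ 2] = 1 := by
      have heq : (f i) ^ 2 = fun y => (x i) ^ 2 * (y i) ^ 2 := by
        funext y; simp [hfdef]; ring
      rw [heq]
      show ∫ y, (x i) ^ 2 * (y i) ^ 2 ∂μ = 1
      rw [integral_const_mul, hEy2 i, hx2 i, mul_one]
    rw [h2, hEi i]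
    have : (x i * w i) ^ 2 = (w i) ^ 2 := by
      rw [mul_pow, hx2 i, one_mul]
    rw [this]
  -- independence of the f i
  have hindep := iIndepFun_pi μs
  have hpair : Set.Pairwise ↑(Finset.univ : Finset (Fin d))
      fun i j => IndepFun (f i) (f j) μ := by
    intro i _ j _ hij
    have h1 : IndepFun (fun y : Fin d → ℝ => y i) (fun y : Fin d → ℝ => y j) μ := by
      rw [hμdef]; exact hindep.indepFun hij
    have := h1.comp (measurable_const_mul (x i)) (measurable_const_mul (x j))
    exact this
  have hvarsum : variance (∑ i, f i) μ = ∑ i, variance (f i) μ :=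
    IndepFun.variance_sum (fun i _ => hmem2 i) hpair
  have hvarle : variance (∑ i, f i) μ ≤ d := by
    rw [hvarsum]
    calc ∑ i, variance (f i) μ = ∑ i, (1 - (w i) ^ 2) := Finset.sum_congr rfl fun i _ => hvar i
      _ ≤ ∑ _i : Fin d, (1 : ℝ) := Finset.sum_le_sum fun i _ => by nlinarith [sq_nonneg (w i)]
      _ = d := by simp
  set M : ℝ := ∑ i, x i * w i with hMdef
  have hEsum : μ[∑ i, f i] = M := by
    simp only [Finset.sum_apply]
    rw [integral_finset_sum _ fun i _ => (hmem2 i).integrable one_le_two]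
    exact Finset.sum_congr rfl fun i _ => hEi i
  have hM : (d : ℝ) * ε / 4 ≤ |M| := key_det d hd v hv ε hε x hx hcorr
  -- Chebyshev
  set c0 : ℝ := (d : ℝ) * ε / 8 with hc0def
  have hc0 : 0 < c0 := by rw [hc0def]; positivity
  have hmemS : MemLp (∑ i, f i) 2 μ := memLp_finset_sum' _ fun i _ => hmem2 i
  have hcheb := meas_ge_le_variance_div_sq (μ := μ) hmemS hc0
  rw [hEsum] at hcheb
  set bad : Set (Fin d → ℝ) := {y | c0 ≤ |(∑ i, f i) y - M|} with hbaddef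
  have hbadMeas : MeasurableSet bad := by
    rw [hbaddef]
    have hSm : Measurable (∑ i, f i) := by
      have heq2 : (∑ i, f i) = fun y => ∑ i, f i y := by funext y; simp [Finset.sum_apply]
      rw [heq2]; exact Finset.measurable_sum Finset.univ fun i _ => hmeas i
    exact measurableSet_le measurable_const (hSm.sub measurable_const).abs
  have hincl : badᶜ ⊆ {y | ε / 8 ≤ (1 / d) * |∑ i, x i * y i|} := by
    intro y hy
    simp only [hbaddef, Set.mem_compl_iff, Set.mem_setOf_eq, not_le] at hy
    have hsumapp : (∑ i, f i) y = ∑ i, x i * y i := by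
      rw [Finset.sum_apply]
    rw [hsumapp] at hy
    have h1 : c0 ≤ |∑ i, x i * y i| := by
      have := abs_sub_abs_le_abs_sub M (∑ i, x i * y i)
      have h2 : |M - ∑ i, x i * y i| = |∑ i, x i * y i - M| := abs_sub_comm _ _
      rw [h2] at this
      rw [hc0def]
      rw [hc0def] at hy
      linarith
    show ε / 8 ≤ (1 / d) * |∑ i, x i * y i|
    rw [hc0def] at h1
    have heq3 : (1 / (d : ℝ)) * ((d : ℝ) * ε / 8) = ε / 8 := by
      field_simp
    calc ε / 8 = (1 / (d : ℝ)) * ((d : ℝ) * ε / 8) := heq3.symm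
      _ ≤ (1 / (d : ℝ)) * |∑ i, x i * y i| :=
          mul_le_mul_of_nonneg_left h1 (by positivity)
  -- numeric bound on the Chebyshev rhs
  set B : ℝ := 64 / ((d : ℝ) * ε ^ 2) with hBdef
  have hB0 : 0 ≤ B := by rw [hBdef]; positivity
  have hnum : variance (∑ i, f i) μ / c0 ^ 2 ≤ B := by
    rw [hBdef, hc0def]
    have hc0sq : ((d : ℝ) * ε / 8) ^ 2 = (d : ℝ) ^ 2 * ε ^ 2 / 64 := by ring
    rw [hc0sq]
    rw [div_le_div_iff₀ (by positivity) (by positivity)]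
    have := hvarle
    nlinarith [hvarle, sq_nonneg ε, hdpos]
  have hbadle : μ bad ≤ ENNReal.ofReal B :=
    le_trans hcheb (ENNReal.ofReal_le_ofReal hnum)
  have hcompl : μ badᶜ = 1 - μ bad := prob_compl_eq_one_sub hbadMeas
  have hfinal : ENNReal.ofReal (1 - B) ≤ μ badᶜ := by
    rw [hcompl]
    rw [ENNReal.ofReal_sub _ hB0, ENNReal.ofReal_one]
    exact tsub_le_tsub le_rfl hbadle
  calc ENNReal.ofReal (1 - 64 / (d * ε ^ 2)) = ENNReal.ofReal (1 - B) := by rw [hBdef]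
    _ ≤ μ badᶜ := hfinal
    _ ≤ μ {y | ε / 8 ≤ (1 / d) * |∑ i, x i * y i|} := measure_mono hincl
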